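/- For all integers l ≥ 1 and ν ≥ 1, the degree-ν coefficient of M(t)^l satisfies Σ_{i₁+⋯+i_l = ν, each i_j ≥ 1} M_{i₁}⋯M_{i_l} ≤ λ^{l-1} · M_ν. -/

import Mathlib

open Finset

/-- Recursion for sums over `antidiagonalTuple`. -/
lemma tuple_rec_aux (g : ℕ → ℝ) (l ν : ℕ) :
    ∑ f ∈ Finset.Nat.antidiagonalTuple (l + 1) ν, ∏ j, g (f j)
      = ∑ p ∈ Finset.HasAntidiagonal.antidiagonal ν,
          g p.1 * ∑ f ∈ Finset.Nat.antidiagonalTuple l p.2, ∏ j, g (f j) := by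
  simp_rw [Finset.mul_sum]
  rw [Finset.sum_sigma']
  refine Finset.sum_nbij'
    (fun (f : Fin (l + 1) → ℕ) =>
      (⟨(f 0, ∑ j : Fin l, Fin.tail f j), Fin.tail f⟩ : (_ : ℕ × ℕ) × (Fin l → ℕ)))
    (fun q => Fin.cons q.1.1 q.2) ?_ ?_ ?_ ?_ ?_
  · intro f hf
    rw [Finset.Nat.mem_antidiagonalTuple] at hf
    rw [Finset.mem_sigma]
    constructor
    · rw [Finset.HasAntidiagonal.mem_antidiagonal, ← hf, Fin.sum_univ_succ]
      rfl
    · rw [Finset.Nat.mem_antidiagonalTuple]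
  · rintro ⟨⟨a, b⟩, f2⟩ hq
    rw [Finset.mem_sigma, Finset.HasAntidiagonal.mem_antidiagonal, Finset.Nat.mem_antidiagonalTuple] at hq
    rw [Finset.Nat.mem_antidiagonalTuple, Fin.sum_univ_succ]
    beta_reduce
    simp only [Fin.cons_zero, Fin.cons_succ]
    rw [hq.2]
    exact hq.1
  · intro f hf
    simp [Fin.cons_self_tail]
  · rintro ⟨⟨a, b⟩, f2⟩ hq
    rw [Finset.mem_sigma, Finset.HasAntidiagonal.mem_antidiagonal, Finset.Nat.mem_antidiagonalTuple] at hq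
    simp only [Fin.cons_zero, Fin.tail_cons]
    rw [hq.2]
  · intro f hf
    rw [Fin.prod_univ_succ]
    rfl

lemma basel_aux : ∀ n : ℕ, ∑ k ∈ Finset.range n, (1 : ℝ) / ((k : ℝ) + 1) ^ 2 ≤ 2 - 1 / (n : ℝ) := by
  intro n
  induction n with
  | zero => norm_num
  | succ n ih =>
    rcases Nat.eq_zero_or_pos n with h0 | h1
    · subst h0; norm_num
    rw [Finset.sum_range_succ]
    push_cast
    have hn : (1:ℝ) ≤ (n : ℝ) := by exact_mod_cast h1
    have key : (1 : ℝ) / ((n : ℝ) + 1) ^ 2 ≤ 1 / (n:ℝ) - 1 / ((n:ℝ) + 1) := by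
      rw [div_sub_div _ _ (by linarith) (by linarith),
        div_le_div_iff₀ (by positivity) (by positivity)]
      nlinarith
    linarith

lemma basel2_aux (n : ℕ) : ∑ k ∈ Finset.Ico 1 n, (1 : ℝ) / ((k : ℝ)) ^ 2 ≤ 2 := by
  rw [Finset.sum_Ico_eq_sum_range]
  calc ∑ k ∈ Finset.range (n - 1), (1 : ℝ) / ((1 + k : ℕ) : ℝ) ^ 2
      = ∑ k ∈ Finset.range (n - 1), (1 : ℝ) / ((k : ℝ) + 1) ^ 2 := by
        apply Finset.sum_congr rfl; intro k _; push_cast; ring_nf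
    _ ≤ 2 - 1 / ((n - 1 : ℕ) : ℝ) := basel_aux _
    _ ≤ 2 := by
        have h1 : (0:ℝ) ≤ ((n-1:ℕ):ℝ) := Nat.cast_nonneg _
        have h2 : (0:ℝ) ≤ 1 / ((n-1:ℕ):ℝ) := by positivity
        linarith

set_option maxHeartbeats 1000000 in
/-- Fix `c > 0`, `λ = 1/c`, and `M ν = (1/(16c))·c^ν/ν²`.
For all integers `l ≥ 1` and `ν ≥ 1`, the degree-`ν` coefficient of `M(t)^l`, namely
`∑_{i₁+⋯+i_l = ν, each i_j ≥ 1} M i₁ ⋯ M i_l`, is at most `λ^(l-1) · M ν`. -/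
theorem stmt_2 (c lam : ℝ) (hc : 0 < c) (hlam : lam = 1 / c)
    (M : ℕ → ℝ) (hM : ∀ ν : ℕ, M ν = 1 / (16 * c) * c ^ ν / (ν : ℝ) ^ 2) :
    ∀ l ν : ℕ, 1 ≤ l → 1 ≤ ν →
      ∑ f ∈ (Finset.Nat.antidiagonalTuple l ν).filter (fun f => ∀ j, 1 ≤ f j),
        ∏ j, M (f j)
      ≤ lam ^ (l - 1) * M ν := by
  have hM0 : M 0 = 0 := by simp [hM]
  have hMnn : ∀ k, 0 ≤ M k := by
    intro k; rw [hM]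
    apply div_nonneg _ (sq_nonneg _)
    exact mul_nonneg (by positivity) (pow_nonneg hc.le k)
  have hlamnn : 0 ≤ lam := by rw [hlam]; exact le_of_lt (one_div_pos.mpr hc)
  -- the filter can be dropped since `M 0 = 0`
  have hfilter : ∀ l ν : ℕ,
      ∑ f ∈ (Finset.Nat.antidiagonalTuple l ν).filter (fun f => ∀ j, 1 ≤ f j),
        ∏ j, M (f j)
      = ∑ f ∈ Finset.Nat.antidiagonalTuple l ν, ∏ j, M (f j) := by
    intro l ν
    apply Finset.sum_filter_of_ne
    intro f _ hne j
    by_contra h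
    push_neg at h
    interval_cases hj : f j
    exact hne (Finset.prod_eq_zero (Finset.mem_univ j) (by rw [hj, hM0]))
  -- the key quadratic estimate
  have hquad : ∀ ν : ℕ, 1 ≤ ν →
      ∑ p ∈ Finset.HasAntidiagonal.antidiagonal ν, M p.1 * M p.2 ≤ lam * M ν := by
    intro ν hν
    rw [Finset.Nat.sum_antidiagonal_eq_sum_range_succ_mk]
    have hsub : ∑ k ∈ Finset.range (ν + 1), M k * M (ν - k)
        = ∑ k ∈ Finset.Ico 1 ν, M k * M (ν - k) := by
      symm
      apply Finset.sum_subset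
      · intro k hk
        rw [Finset.mem_Ico] at hk
        rw [Finset.mem_range]
        omega
      · intro k hk1 hk2
        rw [Finset.mem_range] at hk1
        rw [Finset.mem_Ico] at hk2
        have : k = 0 ∨ k = ν := by omega
        rcases this with h | h
        · rw [h, hM0, zero_mul]
        · rw [h, Nat.sub_self, hM0, mul_zero]
    rw [hsub]
    set a : ℝ := 1 / (16 * c) with ha
    have hc16 : (0:ℝ) < 16 * c := by linarith
    have hapos : 0 < a := by rw [ha]; exact one_div_pos.mpr hc16
    have hνR : (0:ℝ) < (ν : ℝ) := by exact_mod_cast hν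
    -- termwise bound
    have hterm : ∀ k ∈ Finset.Ico 1 ν,
        M k * M (ν - k) ≤ (2 * a ^ 2 * c ^ ν / (ν:ℝ)^2) *
          (1 / (k:ℝ)^2 + 1 / ((ν - k : ℕ):ℝ)^2) := by
      intro k hk
      rw [Finset.mem_Ico] at hk
      have hkν : k ≤ ν := le_of_lt hk.2
      have hx : (0:ℝ) < (k:ℝ) := by exact_mod_cast hk.1
      have hy : (0:ℝ) < ((ν - k : ℕ):ℝ) := by
        have : 1 ≤ ν - k := by omega
        exact_mod_cast Nat.lt_of_lt_of_le Nat.zero_lt_one this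
      have hsum : (k:ℝ) + ((ν - k : ℕ):ℝ) = (ν:ℝ) := by
        have := Nat.cast_sub hkν (R := ℝ)
        rw [this]; ring
      have hcpow : c ^ k * c ^ (ν - k) = c ^ ν := by
        rw [← pow_add]; congr 1; omega
      have hMk2 : M k * M (ν - k) = a ^ 2 * c ^ ν / ((k:ℝ)^2 * ((ν - k : ℕ):ℝ)^2) := by
        rw [hM, hM, ← hcpow, ha]
        field_simp [hc.ne', hx.ne', hy.ne']
      rw [hMk2]
      have hgoal : a ^ 2 * c ^ ν / ((k:ℝ)^2 * ((ν - k : ℕ):ℝ)^2)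
          ≤ (2 * a ^ 2 * c ^ ν / (ν:ℝ)^2) * (1 / (k:ℝ)^2 + 1 / ((ν - k : ℕ):ℝ)^2) := by
        set x := (k:ℝ); set y := ((ν - k : ℕ):ℝ)
        have hac : (0:ℝ) < a ^ 2 * c ^ ν := mul_pos (pow_pos hapos 2) (pow_pos hc ν)
        rw [div_le_iff₀ (mul_pos (pow_pos hx 2) (pow_pos hy 2))]
        have expand : (2 * a ^ 2 * c ^ ν / (ν:ℝ)^2) * (1 / x^2 + 1 / y^2) * (x^2 * y^2)
            = (a ^ 2 * c ^ ν) * (2 * (x^2 + y^2) / (ν:ℝ)^2) := by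
          field_simp [hx.ne', hy.ne', hνR.ne']
          ring
        rw [expand]
        have h1 : (1:ℝ) ≤ 2 * (x^2 + y^2) / (ν:ℝ)^2 := by
          rw [le_div_iff₀ (pow_pos hνR 2), ← hsum]
          nlinarith [sq_nonneg (x - y)]
        nlinarith
      exact hgoal
    calc ∑ k ∈ Finset.Ico 1 ν, M k * M (ν - k)
        ≤ ∑ k ∈ Finset.Ico 1 ν, (2 * a ^ 2 * c ^ ν / (ν:ℝ)^2) *
            (1 / (k:ℝ)^2 + 1 / ((ν - k : ℕ):ℝ)^2) := Finset.sum_le_sum hterm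
      _ = (2 * a ^ 2 * c ^ ν / (ν:ℝ)^2) *
            ((∑ k ∈ Finset.Ico 1 ν, 1 / (k:ℝ)^2)
              + ∑ k ∈ Finset.Ico 1 ν, 1 / ((ν - k : ℕ):ℝ)^2) := by
          rw [← Finset.mul_sum, Finset.sum_add_distrib]
      _ ≤ (2 * a ^ 2 * c ^ ν / (ν:ℝ)^2) * (2 + 2) := by
          have hS2 : ∑ k ∈ Finset.Ico 1 ν, (1:ℝ) / ((ν - k : ℕ):ℝ)^2
              = ∑ k ∈ Finset.Ico 1 ν, (1:ℝ) / ((k:ℕ):ℝ)^2 := by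
            refine Finset.sum_nbij' (fun k => ν - k) (fun k => ν - k) ?_ ?_ ?_ ?_ ?_
            · intro k hk; simp only [Finset.mem_Ico] at hk ⊢; omega
            · intro k hk; simp only [Finset.mem_Ico] at hk ⊢; omega
            · intro k hk; simp only [Finset.mem_Ico] at hk
              show ν - (ν - k) = k; omega
            · intro k hk; simp only [Finset.mem_Ico] at hk
              show ν - (ν - k) = k; omega
            · intro k hk; rfl
          rw [hS2]
          have hB := basel2_aux ν
          have hfac : (0:ℝ) ≤ 2 * a ^ 2 * c ^ ν / (ν:ℝ)^2 := by
            apply div_nonneg _ (sq_nonneg _)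
            have := pow_nonneg hc.le ν
            nlinarith [sq_nonneg a]
          apply mul_le_mul_of_nonneg_left _ hfac
          linarith
      _ ≤ lam * M ν := by
          have hX : (0:ℝ) ≤ a ^ 2 * c ^ ν / (ν:ℝ)^2 :=
            div_nonneg (mul_nonneg (sq_nonneg a) (pow_nonneg hc.le ν)) (sq_nonneg _)
          have hRHS : lam * M ν = 16 * (a ^ 2 * c ^ ν / (ν:ℝ)^2) := by
            rw [hM, hlam, ha]
            field_simp [hc.ne', hνR.ne']
          have hLHS : (2 * a ^ 2 * c ^ ν / (ν:ℝ)^2) * (2 + 2)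
              = 8 * (a ^ 2 * c ^ ν / (ν:ℝ)^2) := by ring
          rw [hRHS, hLHS]
          linarith
  -- main induction on l
  have key : ∀ l : ℕ, 1 ≤ l → ∀ ν : ℕ, 1 ≤ ν →
      ∑ f ∈ Finset.Nat.antidiagonalTuple l ν, ∏ j, M (f j) ≤ lam ^ (l - 1) * M ν := by
    intro l
    induction l with
    | zero => omega
    | succ l ih =>
      intro _ ν hν
      rcases Nat.eq_zero_or_pos l with hl0 | hl1
      · subst hl0
        rw [Finset.Nat.antidiagonalTuple_one, Finset.sum_singleton]
        simp [Fin.prod_univ_one]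
      · -- l ≥ 1
        rw [tuple_rec_aux]
        have hstep : ∀ p ∈ Finset.HasAntidiagonal.antidiagonal ν,
            M p.1 * ∑ f ∈ Finset.Nat.antidiagonalTuple l p.2, ∏ j, M (f j)
            ≤ lam ^ (l - 1) * (M p.1 * M p.2) := by
          intro p hp
          rcases Nat.eq_zero_or_pos p.2 with h2 | h2
          · have hz : ∑ f ∈ Finset.Nat.antidiagonalTuple l p.2, ∏ j, M (f j) = 0 := by
              rw [h2, Finset.Nat.antidiagonalTuple_zero_right, Finset.sum_singleton]
              apply Finset.prod_eq_zero (Finset.mem_univ ⟨0, hl1⟩)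
              simpa using hM0
            rw [hz, mul_zero, h2, hM0, mul_zero, mul_zero]
          · have := ih hl1 p.2 h2
            calc M p.1 * ∑ f ∈ Finset.Nat.antidiagonalTuple l p.2, ∏ j, M (f j)
                ≤ M p.1 * (lam ^ (l - 1) * M p.2) :=
                  mul_le_mul_of_nonneg_left this (hMnn p.1)
              _ = lam ^ (l - 1) * (M p.1 * M p.2) := by ring
        calc ∑ p ∈ Finset.HasAntidiagonal.antidiagonal ν,
              M p.1 * ∑ f ∈ Finset.Nat.antidiagonalTuple l p.2, ∏ j, M (f j)
            ≤ ∑ p ∈ Finset.HasAntidiagonal.antidiagonal ν, lam ^ (l - 1) * (M p.1 * M p.2) :=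
              Finset.sum_le_sum hstep
          _ = lam ^ (l - 1) * ∑ p ∈ Finset.HasAntidiagonal.antidiagonal ν, M p.1 * M p.2 := by
              rw [Finset.mul_sum]
          _ ≤ lam ^ (l - 1) * (lam * M ν) :=
              mul_le_mul_of_nonneg_left (hquad ν hν) (pow_nonneg hlamnn _)
          _ = lam ^ (l + 1 - 1) * M ν := by
              rw [← mul_assoc, ← pow_succ]
              congr 2
              omega
  intro l ν hl hν
  rw [hfilter]
  exact key l hl ν hν
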